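/- Assume μ₁ + μ₂ > 0 and p(z,x) > 0 for all (z,x). Let q₁, q₂, q₃ be strictly positive (a pmf on ℛ̂, conditional pmfs on 𝒵 given (r̂,x), and conditional pmfs on ℛ̂ given z, respectively). Let w' be the channel w'(r̂|z,x) = (1/η(z,x))·[ q₁(r̂)^{μ₁} q₂(z|r̂,x)^{μ₁} q₃(r̂|z)^{μ₂} 2^{−∑_r p(r|z,x) d(r̂,r)} ]^{1/(μ₁+μ₂)} (η(z,x) a normalizer), and let q₁', q₂', q₃' be the distributions induced by w', namely q₁'(r̂) = ∑_{z,x} w'(r̂|z,x)p(z,x), q₂'(z|r̂,x) = w'(r̂|z,x)p(z|x)/∑_{z'} w'(r̂|z',x)p(z'|x), q₃'(r̂|z) = ∑_x w'(r̂|z,x)p(x|z), all of which are strictly positive. Then f(w'; q₁'; q₂'; q₃') ≤ f(w; q₁; q₂; q₃) for every channel w; in particular one full iteration of the Blahut–Arimoto algorithm does not increase the objective f. -/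

import Mathlib

open Real Finset

lemma logb_rpow' (x y : ℝ) (hx : 0 < x) : Real.logb 2 (x ^ y) = y * Real.logb 2 x := by
  rw [Real.logb, Real.logb, Real.log_rpow hx, mul_div_assoc]

lemma gibbs_aux {ι : Type} [Fintype ι] (a b : ι → ℝ) (ha : ∀ i, 0 ≤ a i)
    (hb : ∀ i, 0 < b i) (hs : ∑ i, b i ≤ ∑ i, a i) :
    0 ≤ ∑ i, a i * (Real.logb 2 (a i) - Real.logb 2 (b i)) := by
  have key : ∀ i, a i * (Real.log (b i) - Real.log (a i)) ≤ b i - a i := by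
    intro i
    rcases eq_or_lt_of_le (ha i) with h | h
    · simpa [← h] using (hb i).le
    · have hlog := Real.log_le_sub_one_of_pos (div_pos (hb i) h)
      rw [Real.log_div (hb i).ne' h.ne'] at hlog
      have := mul_le_mul_of_nonneg_left hlog h.le
      calc a i * (Real.log (b i) - Real.log (a i)) ≤ a i * (b i / a i - 1) := this
        _ = b i - a i := by field_simp
  have h2 : ∑ i, a i * (Real.log (b i) - Real.log (a i)) ≤ 0 := by
    calc ∑ i, a i * (Real.log (b i) - Real.log (a i)) ≤ ∑ i, (b i - a i) :=
          Finset.sum_le_sum fun i _ => key i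
      _ = ∑ i, b i - ∑ i, a i := Finset.sum_sub_distrib _ _
      _ ≤ 0 := by linarith
  have h3 : 0 ≤ ∑ i, a i * (Real.log (a i) - Real.log (b i)) := by
    have : ∑ i, a i * (Real.log (a i) - Real.log (b i))
        = -∑ i, a i * (Real.log (b i) - Real.log (a i)) := by
      rw [← Finset.sum_neg_distrib]; exact Finset.sum_congr rfl fun i _ => by ring
    rw [this]; linarith
  have hlog2 : (0:ℝ) < Real.log 2 := Real.log_pos one_lt_two
  have heq : ∑ i, a i * (Real.logb 2 (a i) - Real.logb 2 (b i))
      = (∑ i, a i * (Real.log (a i) - Real.log (b i))) / Real.log 2 := by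
    rw [Finset.sum_div]
    exact Finset.sum_congr rfl fun i _ => by rw [Real.logb, Real.logb]; ring
  rw [heq]
  positivity

lemma gibbs_kl {ι : Type} [Fintype ι] (a q' q : ι → ℝ) (c : ℝ) (hc : 0 < c)
    (haq' : ∀ i, a i = c * q' i) (hq' : ∀ i, 0 < q' i) (hq : ∀ i, 0 < q i)
    (hsq : ∑ i, q i = 1) (hsq' : ∑ i, q' i = 1) :
    0 ≤ ∑ i, a i * (Real.logb 2 (q' i) - Real.logb 2 (q i)) := by
  have ha : ∀ i, 0 < a i := fun i => (haq' i) ▸ mul_pos hc (hq' i)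
  have hmain := gibbs_aux a (fun i => c * q i) (fun i => (ha i).le)
    (fun i => mul_pos hc (hq i))
    (by rw [← Finset.mul_sum, hsq, mul_one]
        have : ∑ i, a i = c := by
          rw [Finset.sum_congr rfl fun i _ => haq' i, ← Finset.mul_sum, hsq', mul_one]
        linarith)
  have heq : ∀ i, a i * (Real.logb 2 (a i) - Real.logb 2 (c * q i))
      = a i * (Real.logb 2 (q' i) - Real.logb 2 (q i)) := by
    intro i
    rw [haq' i, Real.logb_mul hc.ne' (hq' i).ne', Real.logb_mul hc.ne' (hq i).ne']
    ring
  rw [← Finset.sum_congr rfl fun i _ => heq i]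
  exact hmain

lemma stepB_core {ι : Type} [Fintype ι] [Nonempty ι] (K : ι → ℝ) (hK : ∀ i, 0 < K i)
    (w : ι → ℝ) (hw : ∀ i, 0 ≤ w i) (hwsum : ∑ i, w i = 1) :
    ∑ i, (K i / ∑ i', K i') * (Real.logb 2 (K i / ∑ i', K i') - Real.logb 2 (K i)) ≤
    ∑ i, w i * (Real.logb 2 (w i) - Real.logb 2 (K i)) := by
  set S := ∑ i', K i' with hSdef
  have hS : 0 < S := Finset.sum_pos (fun i _ => hK i) Finset.univ_nonempty
  have hlogdiv : ∀ i, Real.logb 2 (K i / S) = Real.logb 2 (K i) - Real.logb 2 S :=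
    fun i => Real.logb_div (hK i).ne' hS.ne'
  have hLHS : ∑ i, (K i / S) * (Real.logb 2 (K i / S) - Real.logb 2 (K i))
      = -Real.logb 2 S := by
    have h : ∀ i, (K i / S) * (Real.logb 2 (K i / S) - Real.logb 2 (K i))
        = (K i / S) * (-Real.logb 2 S) := by intro i; rw [hlogdiv i]; ring
    rw [Finset.sum_congr rfl fun i _ => h i, ← Finset.sum_mul, ← Finset.sum_div,
      ← hSdef, div_self hS.ne', one_mul]
  rw [hLHS]
  have hgibbs := gibbs_aux w (fun i => K i / S) hw (fun i => div_pos (hK i) hS)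
    (by rw [← Finset.sum_div, ← hSdef, div_self hS.ne', hwsum])
  have hsplit : ∑ i, w i * (Real.logb 2 (w i) - Real.logb 2 (K i))
      = (∑ i, w i * (Real.logb 2 (w i) - Real.logb 2 (K i / S)))
        - (∑ i, w i) * Real.logb 2 S := by
    rw [Finset.sum_mul, ← Finset.sum_sub_distrib]
    refine Finset.sum_congr rfl fun i _ => ?_
    rw [hlogdiv i]; ring
  rw [hsplit, hwsum, one_mul]
  linarith


noncomputable section

variable {𝒵 𝒳 ℛ ℛh : Type} [Fintype 𝒵] [Fintype 𝒳] [Fintype ℛ] [Fintype ℛh]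

/-- Marginal `p(z,x)` of the fixed joint pmf `p(z,x,r)`. -/
def pZX (p : 𝒵 → 𝒳 → ℛ → ℝ) (z : 𝒵) (x : 𝒳) : ℝ := ∑ r, p z x r

/-- Marginal `p(x)`. -/
def pX (p : 𝒵 → 𝒳 → ℛ → ℝ) (x : 𝒳) : ℝ := ∑ z, ∑ r, p z x r

/-- Marginal `p(z)`. -/
def pZ (p : 𝒵 → 𝒳 → ℛ → ℝ) (z : 𝒵) : ℝ := ∑ x, ∑ r, p z x r

/-- `p` is a probability mass function on `𝒵 × 𝒳 × ℛ`. -/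
def IsPMF (p : 𝒵 → 𝒳 → ℛ → ℝ) : Prop :=
  (∀ z x r, 0 ≤ p z x r) ∧ ∑ z, ∑ x, ∑ r, p z x r = 1

/-- A channel `w(r̂|z,x)`: entries in `[0,1]` summing to `1` over `r̂` for each `(z,x)`. -/
def IsChannel (w : ℛh → 𝒵 → 𝒳 → ℝ) : Prop :=
  (∀ rh z x, 0 ≤ w rh z x ∧ w rh z x ≤ 1) ∧ (∀ z x, ∑ rh, w rh z x = 1)

/-- Induced joint pmf `q(r̂,z,x) = w(r̂|z,x) p(z,x)`. -/
def qJ (p : 𝒵 → 𝒳 → ℛ → ℝ) (w : ℛh → 𝒵 → 𝒳 → ℝ) (rh : ℛh) (z : 𝒵) (x : 𝒳) : ℝ :=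
  w rh z x * pZX p z x

/-- Induced marginal `q(r̂,x)`. -/
def qRhX (p : 𝒵 → 𝒳 → ℛ → ℝ) (w : ℛh → 𝒵 → 𝒳 → ℝ) (rh : ℛh) (x : 𝒳) : ℝ :=
  ∑ z, qJ p w rh z x

/-- Induced marginal `q(r̂)`. -/
def qRh (p : 𝒵 → 𝒳 → ℛ → ℝ) (w : ℛh → 𝒵 → 𝒳 → ℝ) (rh : ℛh) : ℝ :=
  ∑ z, ∑ x, qJ p w rh z x

/-- Induced marginal `q(r̂,z)`. -/
def qRhZ (p : 𝒵 → 𝒳 → ℛ → ℝ) (w : ℛh → 𝒵 → 𝒳 → ℝ) (rh : ℛh) (z : 𝒵) : ℝ :=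
  ∑ x, qJ p w rh z x

/-- Induced marginal `q(z)`. -/
def qZ (p : 𝒵 → 𝒳 → ℛ → ℝ) (w : ℛh → 𝒵 → 𝒳 → ℝ) (z : 𝒵) : ℝ :=
  ∑ rh, ∑ x, qJ p w rh z x

/-- Expected distortion `E_q[d(R̂,R)]` under `q(r̂,z,x,r) = w(r̂|z,x) p(z,x,r)`. -/
def expDist (p : 𝒵 → 𝒳 → ℛ → ℝ) (w : ℛh → 𝒵 → 𝒳 → ℝ) (d : ℛh → ℛ → ℝ) : ℝ :=
  ∑ rh, ∑ z, ∑ x, ∑ r, w rh z x * p z x r * d rh r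

/-- Mutual information `I(R̂;X)` of the induced joint pmf (base-2 logs, `0·log₂0 = 0`). -/
def IRhX (p : 𝒵 → 𝒳 → ℛ → ℝ) (w : ℛh → 𝒵 → 𝒳 → ℝ) : ℝ :=
  ∑ rh, ∑ x, qRhX p w rh x * logb 2 (qRhX p w rh x / (qRh p w rh * pX p x))

/-- Mutual information `I(R̂,Z;X)` of the induced joint pmf. -/
def IRhZX (p : 𝒵 → 𝒳 → ℛ → ℝ) (w : ℛh → 𝒵 → 𝒳 → ℝ) : ℝ :=
  ∑ rh, ∑ z, ∑ x, qJ p w rh z x * logb 2 (qJ p w rh z x / (qRhZ p w rh z * pX p x))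

/-- Mutual information `I(Z;X)` of the fixed pmf `p`. -/
def IZX (p : 𝒵 → 𝒳 → ℛ → ℝ) : ℝ :=
  ∑ z, ∑ x, pZX p z x * logb 2 (pZX p z x / (pZ p z * pX p x))

/-- Entropy `H(Z)` of the fixed pmf `p`. -/
def HZ (p : 𝒵 → 𝒳 → ℛ → ℝ) : ℝ := -∑ z, pZ p z * logb 2 (pZ p z)

/-- The objective `g(w) = E_q[d] + μ₁ (I(R̂;X) − ε) + μ₂ (I(R̂,Z;X) − δ)`. -/
def gObj (p : 𝒵 → 𝒳 → ℛ → ℝ) (d : ℛh → ℛ → ℝ) (μ₁ μ₂ ε δ : ℝ)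
    (w : ℛh → 𝒵 → 𝒳 → ℝ) : ℝ :=
  expDist p w d + μ₁ * (IRhX p w - ε) + μ₂ * (IRhZX p w - δ)

/-- The constant `θ = (μ₁+μ₂) I(Z;X) − μ₁ H(Z) − μ₁ ε − μ₂ δ`, computed from `p` alone. -/
def θconst (p : 𝒵 → 𝒳 → ℛ → ℝ) (μ₁ μ₂ ε δ : ℝ) : ℝ :=
  (μ₁ + μ₂) * IZX p - μ₁ * HZ p - μ₁ * ε - μ₂ * δ

/-- The surrogate objective
`f(w; q₁; q₂; q₃) = ∑_{(r̂,z,x): p(z,x)>0} p(z,x) w(r̂|z,x) [∑_r p(r|z,x) d(r̂,r)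
  + (μ₁+μ₂) log₂ w(r̂|z,x) − μ₁ log₂ q₁(r̂) − μ₁ log₂ q₂(z|r̂,x) − μ₂ log₂ q₃(r̂|z)] + θ`. -/
def fObj (p : 𝒵 → 𝒳 → ℛ → ℝ) (d : ℛh → ℛ → ℝ) (μ₁ μ₂ ε δ : ℝ)
    (w : ℛh → 𝒵 → 𝒳 → ℝ) (q₁ : ℛh → ℝ) (q₂ : 𝒵 → ℛh → 𝒳 → ℝ) (q₃ : ℛh → 𝒵 → ℝ) : ℝ :=
  (∑ rh, ∑ z, ∑ x,
      if 0 < pZX p z x then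
        pZX p z x * w rh z x *
          ((∑ r, (p z x r / pZX p z x) * d rh r)
            + (μ₁ + μ₂) * logb 2 (w rh z x)
            - μ₁ * logb 2 (q₁ rh) - μ₁ * logb 2 (q₂ z rh x) - μ₂ * logb 2 (q₃ rh z))
      else 0)
    + θconst p μ₁ μ₂ ε δ

/-- `q₁` is a strictly positive pmf on `ℛ̂`. -/
def PosPMF1 (q₁ : ℛh → ℝ) : Prop := (∀ rh, 0 < q₁ rh) ∧ ∑ rh, q₁ rh = 1

/-- `q₂(·|r̂,x)` is, for each `(r̂,x)`, a strictly positive pmf on `𝒵`. -/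
def PosPMF2 (q₂ : 𝒵 → ℛh → 𝒳 → ℝ) : Prop :=
  (∀ z rh x, 0 < q₂ z rh x) ∧ ∀ rh x, ∑ z, q₂ z rh x = 1

/-- `q₃(·|z)` is, for each `z`, a strictly positive pmf on `ℛ̂`. -/
def PosPMF3 (q₃ : ℛh → 𝒵 → ℝ) : Prop :=
  (∀ rh z, 0 < q₃ rh z) ∧ ∀ z, ∑ rh, q₃ rh z = 1

/-- The conditional `p(z|x)`. -/
def pZgX (p : 𝒵 → 𝒳 → ℛ → ℝ) (z : 𝒵) (x : 𝒳) : ℝ := pZX p z x / pX p x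

/-- The conditional `p(x|z)`. -/
def pXgZ (p : 𝒵 → 𝒳 → ℛ → ℝ) (x : 𝒳) (z : 𝒵) : ℝ := pZX p z x / pZ p z

/-- The induced distribution `q₁'(r̂) = ∑_{z,x} w(r̂|z,x) p(z,x)`. -/
def q1ind (p : 𝒵 → 𝒳 → ℛ → ℝ) (w : ℛh → 𝒵 → 𝒳 → ℝ) (rh : ℛh) : ℝ :=
  ∑ z, ∑ x, w rh z x * pZX p z x

/-- The induced conditional `q₂'(z|r̂,x) = w(r̂|z,x) p(z|x) / ∑_{z'} w(r̂|z',x) p(z'|x)`. -/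
def q2ind (p : 𝒵 → 𝒳 → ℛ → ℝ) (w : ℛh → 𝒵 → 𝒳 → ℝ) (z : 𝒵) (rh : ℛh) (x : 𝒳) : ℝ :=
  w rh z x * pZgX p z x / ∑ z', w rh z' x * pZgX p z' x

/-- The induced conditional `q₃'(r̂|z) = ∑_x w(r̂|z,x) p(x|z)`. -/
def q3ind (p : 𝒵 → 𝒳 → ℛ → ℝ) (w : ℛh → 𝒵 → 𝒳 → ℝ) (rh : ℛh) (z : 𝒵) : ℝ :=
  ∑ x, w rh z x * pXgZ p x z

/-- The Blahut–Arimoto kernel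
`K(r̂,z,x) = [ q₁(r̂)^{μ₁} q₂(z|r̂,x)^{μ₁} q₃(r̂|z)^{μ₂} 2^{−∑_r p(r|z,x) d(r̂,r)} ]^{1/(μ₁+μ₂)}`. -/
def BAker (p : 𝒵 → 𝒳 → ℛ → ℝ) (d : ℛh → ℛ → ℝ) (μ₁ μ₂ : ℝ)
    (q₁ : ℛh → ℝ) (q₂ : 𝒵 → ℛh → 𝒳 → ℝ) (q₃ : ℛh → 𝒵 → ℝ)
    (rh : ℛh) (z : 𝒵) (x : 𝒳) : ℝ :=
  (q₁ rh ^ μ₁ * q₂ z rh x ^ μ₁ * q₃ rh z ^ μ₂ *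
      (2 : ℝ) ^ (-(∑ r, (p z x r / pZX p z x) * d rh r))) ^ (1 / (μ₁ + μ₂))

/-- The Blahut–Arimoto update channel `w'(r̂|z,x) = K(r̂,z,x) / ∑_{r̂'} K(r̂',z,x)`. -/
def BAw (p : 𝒵 → 𝒳 → ℛ → ℝ) (d : ℛh → ℛ → ℝ) (μ₁ μ₂ : ℝ)
    (q₁ : ℛh → ℝ) (q₂ : 𝒵 → ℛh → 𝒳 → ℝ) (q₃ : ℛh → 𝒵 → ℝ)
    (rh : ℛh) (z : 𝒵) (x : 𝒳) : ℝ :=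
  (1 / ∑ rh', BAker p d μ₁ μ₂ q₁ q₂ q₃ rh' z x) * BAker p d μ₁ μ₂ q₁ q₂ q₃ rh z x

/-- Auxiliary: the sum part of `fObj` without the `if` and without `θconst`. -/
def auxSum (p : 𝒵 → 𝒳 → ℛ → ℝ) (d : ℛh → ℛ → ℝ) (μ₁ μ₂ : ℝ) (w : ℛh → 𝒵 → 𝒳 → ℝ)
    (q₁ : ℛh → ℝ) (q₂ : 𝒵 → ℛh → 𝒳 → ℝ) (q₃ : ℛh → 𝒵 → ℝ) : ℝ :=
  ∑ rh, ∑ z, ∑ x,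
    pZX p z x * w rh z x *
      ((∑ r, (p z x r / pZX p z x) * d rh r)
        + (μ₁ + μ₂) * logb 2 (w rh z x)
        - μ₁ * logb 2 (q₁ rh) - μ₁ * logb 2 (q₂ z rh x) - μ₂ * logb 2 (q₃ rh z))

lemma fObj_eq_auxSum (p : 𝒵 → 𝒳 → ℛ → ℝ) (hpZX : ∀ z x, 0 < pZX p z x)
    (d : ℛh → ℛ → ℝ) (μ₁ μ₂ ε δ : ℝ) (w : ℛh → 𝒵 → 𝒳 → ℝ)
    (q₁ : ℛh → ℝ) (q₂ : 𝒵 → ℛh → 𝒳 → ℝ) (q₃ : ℛh → 𝒵 → ℝ) :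
    fObj p d μ₁ μ₂ ε δ w q₁ q₂ q₃
      = auxSum p d μ₁ μ₂ w q₁ q₂ q₃ + θconst p μ₁ μ₂ ε δ := by
  unfold fObj auxSum
  congr 1
  exact Finset.sum_congr rfl fun rh _ => Finset.sum_congr rfl fun z _ =>
    Finset.sum_congr rfl fun x _ => if_pos (hpZX z x)

/-- Assume `μ₁ + μ₂ > 0` and `p(z,x) > 0` for all `(z,x)`.  For strictly
positive `q₁, q₂, q₃`, let `w'` be the Blahut–Arimoto update channel and let
`q₁', q₂', q₃'` be the distributions induced by `w'`.  Then `q₁', q₂', q₃'` are strictly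
positive and `f(w'; q₁'; q₂'; q₃') ≤ f(w; q₁; q₂; q₃)` for every channel `w`; in
particular one full Blahut–Arimoto iteration does not increase the objective `f`. -/
theorem statement7
    (p : 𝒵 → 𝒳 → ℛ → ℝ) (hp : IsPMF p) (hpZX : ∀ z x, 0 < pZX p z x)
    (d : ℛh → ℛ → ℝ) (hd : ∀ rh r, 0 ≤ d rh r)
    (μ₁ μ₂ : ℝ) (hμ₁ : 0 ≤ μ₁) (hμ₂ : 0 ≤ μ₂) (hμ : 0 < μ₁ + μ₂) (ε δ : ℝ)
    (q₁ : ℛh → ℝ) (hq₁ : PosPMF1 q₁)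
    (q₂ : 𝒵 → ℛh → 𝒳 → ℝ) (hq₂ : PosPMF2 q₂)
    (q₃ : ℛh → 𝒵 → ℝ) (hq₃ : PosPMF3 q₃) :
    (∀ rh, 0 < q1ind p (BAw p d μ₁ μ₂ q₁ q₂ q₃) rh) ∧
    (∀ z rh x, 0 < q2ind p (BAw p d μ₁ μ₂ q₁ q₂ q₃) z rh x) ∧
    (∀ rh z, 0 < q3ind p (BAw p d μ₁ μ₂ q₁ q₂ q₃) rh z) ∧
    ∀ w : ℛh → 𝒵 → 𝒳 → ℝ, IsChannel w →
      fObj p d μ₁ μ₂ ε δ (BAw p d μ₁ μ₂ q₁ q₂ q₃)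
          (q1ind p (BAw p d μ₁ μ₂ q₁ q₂ q₃))
          (q2ind p (BAw p d μ₁ μ₂ q₁ q₂ q₃))
          (q3ind p (BAw p d μ₁ μ₂ q₁ q₂ q₃)) ≤
        fObj p d μ₁ μ₂ ε δ w q₁ q₂ q₃ := by
  classical
  obtain ⟨hp0, hp1⟩ := hp
  obtain ⟨hq1pos, hq1sum⟩ := hq₁
  obtain ⟨hq2pos, hq2sum⟩ := hq₂
  obtain ⟨hq3pos, hq3sum⟩ := hq₃
  have hZne : (Finset.univ : Finset 𝒵).Nonempty := by
    by_contra h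
    rw [Finset.not_nonempty_iff_eq_empty] at h
    simp [h] at hp1
  have hXne : (Finset.univ : Finset 𝒳).Nonempty := by
    by_contra h
    rw [Finset.not_nonempty_iff_eq_empty] at h
    simp [h] at hp1
  have hRhne : (Finset.univ : Finset ℛh).Nonempty := by
    by_contra h
    rw [Finset.not_nonempty_iff_eq_empty] at h
    simp [h] at hq1sum
  haveI : Nonempty ℛh := Finset.univ_nonempty_iff.mp hRhne
  have hpX : ∀ x, 0 < pX p x := by
    intro x
    have h : pX p x = ∑ z, pZX p z x := rfl
    rw [h]; exact Finset.sum_pos (fun z _ => hpZX z x) hZne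
  have hpZ : ∀ z, 0 < pZ p z := by
    intro z
    have h : pZ p z = ∑ x, pZX p z x := rfl
    rw [h]; exact Finset.sum_pos (fun x _ => hpZX z x) hXne
  have hsumpZX : ∑ z, ∑ x, pZX p z x = 1 := hp1
  set K : ℛh → 𝒵 → 𝒳 → ℝ := BAker p d μ₁ μ₂ q₁ q₂ q₃ with hKdef
  set W : ℛh → 𝒵 → 𝒳 → ℝ := BAw p d μ₁ μ₂ q₁ q₂ q₃ with hWdef
  have hK : ∀ rh z x, 0 < K rh z x := by
    intro rh z x
    have h1 := Real.rpow_pos_of_pos (hq1pos rh) μ₁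
    have h2 := Real.rpow_pos_of_pos (hq2pos z rh x) μ₁
    have h3 := Real.rpow_pos_of_pos (hq3pos rh z) μ₂
    have h4 := Real.rpow_pos_of_pos (by norm_num : (0:ℝ) < 2)
      (-(∑ r, (p z x r / pZX p z x) * d rh r))
    rw [hKdef]
    exact Real.rpow_pos_of_pos (mul_pos (mul_pos (mul_pos h1 h2) h3) h4) _
  have hS : ∀ z x, 0 < ∑ rh', K rh' z x :=
    fun z x => Finset.sum_pos (fun rh _ => hK rh z x) hRhne
  have hWeq : ∀ rh z x, W rh z x = K rh z x / ∑ rh', K rh' z x := by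
    intro rh z x
    rw [hWdef, hKdef]
    simp only [BAw]
    rw [one_div_mul_eq_div]
  have hWpos : ∀ rh z x, 0 < W rh z x := by
    intro rh z x; rw [hWeq]; exact div_pos (hK rh z x) (hS z x)
  have hWsum : ∀ z x, ∑ rh, W rh z x = 1 := by
    intro z x
    rw [Finset.sum_congr rfl fun rh _ => hWeq rh z x, ← Finset.sum_div,
      div_self (hS z x).ne']
  have hpZgX : ∀ z x, 0 < pZgX p z x := fun z x => div_pos (hpZX z x) (hpX x)
  have hpXgZ : ∀ x z, 0 < pXgZ p x z := fun x z => div_pos (hpZX z x) (hpZ z)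
  have hT : ∀ rh x, 0 < ∑ z', W rh z' x * pZgX p z' x :=
    fun rh x => Finset.sum_pos (fun z _ => mul_pos (hWpos rh z x) (hpZgX z x)) hZne
  have hq1' : ∀ rh, 0 < q1ind p W rh := by
    intro rh
    show 0 < ∑ z, ∑ x, W rh z x * pZX p z x
    exact Finset.sum_pos
      (fun z _ => Finset.sum_pos (fun x _ => mul_pos (hWpos rh z x) (hpZX z x)) hXne) hZne
  have hq2' : ∀ z rh x, 0 < q2ind p W z rh x := by
    intro z rh x
    show 0 < W rh z x * pZgX p z x / ∑ z', W rh z' x * pZgX p z' x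
    exact div_pos (mul_pos (hWpos rh z x) (hpZgX z x)) (hT rh x)
  have hq3' : ∀ rh z, 0 < q3ind p W rh z := by
    intro rh z
    show 0 < ∑ x, W rh z x * pXgZ p x z
    exact Finset.sum_pos (fun x _ => mul_pos (hWpos rh z x) (hpXgZ x z)) hXne
  have hsumq1' : ∑ rh, q1ind p W rh = 1 := by
    show ∑ rh, ∑ z, ∑ x, W rh z x * pZX p z x = 1
    calc ∑ rh, ∑ z, ∑ x, W rh z x * pZX p z x
        = ∑ z, ∑ x, ∑ rh, W rh z x * pZX p z x := by
          rw [Finset.sum_comm]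
          exact Finset.sum_congr rfl fun z _ => Finset.sum_comm
      _ = ∑ z, ∑ x, pZX p z x := Finset.sum_congr rfl fun z _ =>
          Finset.sum_congr rfl fun x _ => by
            rw [← Finset.sum_mul, hWsum z x, one_mul]
      _ = 1 := hsumpZX
  have hsumq2' : ∀ rh x, ∑ z, q2ind p W z rh x = 1 := by
    intro rh x
    show ∑ z, W rh z x * pZgX p z x / ∑ z', W rh z' x * pZgX p z' x = 1
    rw [← Finset.sum_div, div_self (hT rh x).ne']
  have hsumXgZ : ∀ z, ∑ x, pXgZ p x z = 1 := by
    intro z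
    show ∑ x, pZX p z x / pZ p z = 1
    rw [← Finset.sum_div]
    have h : ∑ x, pZX p z x = pZ p z := rfl
    rw [h, div_self (hpZ z).ne']
  have hsumq3' : ∀ z, ∑ rh, q3ind p W rh z = 1 := by
    intro z
    show ∑ rh, ∑ x, W rh z x * pXgZ p x z = 1
    rw [Finset.sum_comm]
    calc ∑ x, ∑ rh, W rh z x * pXgZ p x z
        = ∑ x, pXgZ p x z := Finset.sum_congr rfl fun x _ => by
          rw [← Finset.sum_mul, hWsum z x, one_mul]
      _ = 1 := hsumXgZ z
  refine ⟨hq1', hq2', hq3', ?_⟩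
  intro w hw
  have hKlog : ∀ rh z x, (μ₁ + μ₂) * logb 2 (K rh z x)
      = μ₁ * logb 2 (q₁ rh) + μ₁ * logb 2 (q₂ z rh x) + μ₂ * logb 2 (q₃ rh z)
        - ∑ r, (p z x r / pZX p z x) * d rh r := by
    intro rh z x
    have h1 := Real.rpow_pos_of_pos (hq1pos rh) μ₁
    have h2 := Real.rpow_pos_of_pos (hq2pos z rh x) μ₁
    have h3 := Real.rpow_pos_of_pos (hq3pos rh z) μ₂
    have h4 := Real.rpow_pos_of_pos (by norm_num : (0:ℝ) < 2)
      (-(∑ r, (p z x r / pZX p z x) * d rh r))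
    rw [hKdef]
    simp only [BAker]
    rw [logb_rpow' _ _ (mul_pos (mul_pos (mul_pos h1 h2) h3) h4),
      Real.logb_mul (mul_pos (mul_pos h1 h2) h3).ne' h4.ne',
      Real.logb_mul (mul_pos h1 h2).ne' h3.ne',
      Real.logb_mul h1.ne' h2.ne',
      logb_rpow' _ _ (hq1pos rh), logb_rpow' _ _ (hq2pos z rh x),
      logb_rpow' _ _ (hq3pos rh z), logb_rpow' _ _ (by norm_num : (0:ℝ) < 2),
      Real.logb_self_eq_one (by norm_num : (1:ℝ) < 2)]
    field_simp
    ring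
  have hbr : ∀ (t : ℝ) (rh : ℛh) (z : 𝒵) (x : 𝒳),
      (∑ r, (p z x r / pZX p z x) * d rh r) + (μ₁ + μ₂) * logb 2 t
        - μ₁ * logb 2 (q₁ rh) - μ₁ * logb 2 (q₂ z rh x) - μ₂ * logb 2 (q₃ rh z)
      = (μ₁ + μ₂) * (logb 2 t - logb 2 (K rh z x)) := by
    intro t rh z x
    rw [mul_sub, hKlog rh z x]
    ring
  rw [fObj_eq_auxSum p hpZX d μ₁ μ₂ ε δ W (q1ind p W) (q2ind p W) (q3ind p W),
    fObj_eq_auxSum p hpZX d μ₁ μ₂ ε δ w q₁ q₂ q₃]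
  refine add_le_add ?_ le_rfl
  have hstepA : auxSum p d μ₁ μ₂ W (q1ind p W) (q2ind p W) (q3ind p W)
      ≤ auxSum p d μ₁ μ₂ W q₁ q₂ q₃ := by
    rw [← sub_nonneg]
    have hT₁ : 0 ≤ ∑ rh, ∑ z, ∑ x, pZX p z x * W rh z x
        * (logb 2 (q1ind p W rh) - logb 2 (q₁ rh)) := by
      have hre : ∀ rh, ∑ z, ∑ x, pZX p z x * W rh z x
          * (logb 2 (q1ind p W rh) - logb 2 (q₁ rh))
          = (∑ z, ∑ x, pZX p z x * W rh z x)
            * (logb 2 (q1ind p W rh) - logb 2 (q₁ rh)) := by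
        intro rh
        rw [Finset.sum_mul]
        exact Finset.sum_congr rfl fun z _ => (Finset.sum_mul _ _ _).symm
      rw [Finset.sum_congr rfl fun rh _ => hre rh]
      refine gibbs_kl (fun rh => ∑ z, ∑ x, pZX p z x * W rh z x) (q1ind p W) q₁
        1 one_pos (fun rh => ?_) hq1' hq1pos hq1sum hsumq1'
      rw [one_mul]
      show ∑ z, ∑ x, pZX p z x * W rh z x = ∑ z, ∑ x, W rh z x * pZX p z x
      exact Finset.sum_congr rfl fun z _ => Finset.sum_congr rfl fun x _ => mul_comm _ _
    have hT₂ : 0 ≤ ∑ rh, ∑ z, ∑ x, pZX p z x * W rh z x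
        * (logb 2 (q2ind p W z rh x) - logb 2 (q₂ z rh x)) := by
      refine Finset.sum_nonneg fun rh _ => ?_
      rw [Finset.sum_comm]
      refine Finset.sum_nonneg fun x _ => ?_
      refine gibbs_kl (fun z => pZX p z x * W rh z x) (fun z => q2ind p W z rh x)
        (fun z => q₂ z rh x) (pX p x * ∑ z', W rh z' x * pZgX p z' x)
        (mul_pos (hpX x) (hT rh x)) (fun z => ?_) (fun z => hq2' z rh x)
        (fun z => hq2pos z rh x) (hq2sum rh x) (hsumq2' rh x)
      show pZX p z x * W rh z x
        = (pX p x * ∑ z', W rh z' x * pZgX p z' x)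
          * (W rh z x * (pZX p z x / pX p x) / ∑ z', W rh z' x * pZgX p z' x)
      rw [show (pX p x * ∑ z', W rh z' x * pZgX p z' x)
            * (W rh z x * (pZX p z x / pX p x) / ∑ z', W rh z' x * pZgX p z' x)
          = (pX p x / pX p x)
            * ((∑ z', W rh z' x * pZgX p z' x) / ∑ z', W rh z' x * pZgX p z' x)
            * (W rh z x * pZX p z x) by ring,
        div_self (hpX x).ne', div_self (hT rh x).ne', one_mul, one_mul, mul_comm]
    have hT₃ : 0 ≤ ∑ rh, ∑ z, ∑ x, pZX p z x * W rh z x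
        * (logb 2 (q3ind p W rh z) - logb 2 (q₃ rh z)) := by
      rw [Finset.sum_comm]
      refine Finset.sum_nonneg fun z _ => ?_
      have hre : ∀ rh, ∑ x, pZX p z x * W rh z x
          * (logb 2 (q3ind p W rh z) - logb 2 (q₃ rh z))
          = (∑ x, pZX p z x * W rh z x) * (logb 2 (q3ind p W rh z) - logb 2 (q₃ rh z)) :=
        fun rh => (Finset.sum_mul _ _ _).symm
      rw [Finset.sum_congr rfl fun rh _ => hre rh]
      refine gibbs_kl (fun rh => ∑ x, pZX p z x * W rh z x) (fun rh => q3ind p W rh z)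
        (fun rh => q₃ rh z) (pZ p z) (hpZ z) (fun rh => ?_) (fun rh => hq3' rh z)
        (fun rh => hq3pos rh z) (hq3sum z) (hsumq3' z)
      show ∑ x, pZX p z x * W rh z x = pZ p z * ∑ x, W rh z x * (pZX p z x / pZ p z)
      rw [Finset.mul_sum]
      refine Finset.sum_congr rfl fun x _ => ?_
      rw [show pZ p z * (W rh z x * (pZX p z x / pZ p z))
          = (pZ p z / pZ p z) * (W rh z x * pZX p z x) by ring,
        div_self (hpZ z).ne', one_mul, mul_comm]
    have hdiff : auxSum p d μ₁ μ₂ W q₁ q₂ q₃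
        - auxSum p d μ₁ μ₂ W (q1ind p W) (q2ind p W) (q3ind p W)
        = μ₁ * (∑ rh, ∑ z, ∑ x, pZX p z x * W rh z x
            * (logb 2 (q1ind p W rh) - logb 2 (q₁ rh)))
          + μ₁ * (∑ rh, ∑ z, ∑ x, pZX p z x * W rh z x
            * (logb 2 (q2ind p W z rh x) - logb 2 (q₂ z rh x)))
          + μ₂ * (∑ rh, ∑ z, ∑ x, pZX p z x * W rh z x
            * (logb 2 (q3ind p W rh z) - logb 2 (q₃ rh z))) := by
      unfold auxSum
      simp only [← Finset.sum_sub_distrib, Finset.mul_sum, ← Finset.sum_add_distrib]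
      refine Finset.sum_congr rfl fun rh _ => Finset.sum_congr rfl fun z _ =>
        Finset.sum_congr rfl fun x _ => ?_
      ring
    rw [hdiff]
    have h1 := mul_nonneg hμ₁ hT₁
    have h2 := mul_nonneg hμ₁ hT₂
    have h3 := mul_nonneg hμ₂ hT₃
    linarith
  have hrw : ∀ v : ℛh → 𝒵 → 𝒳 → ℝ,
      auxSum p d μ₁ μ₂ v q₁ q₂ q₃
      = ∑ z, ∑ x, pZX p z x * (μ₁ + μ₂)
          * ∑ rh, v rh z x * (logb 2 (v rh z x) - logb 2 (K rh z x)) := by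
    intro v
    unfold auxSum
    rw [Finset.sum_comm]
    refine Finset.sum_congr rfl fun z _ => ?_
    rw [Finset.sum_comm]
    refine Finset.sum_congr rfl fun x _ => ?_
    rw [Finset.mul_sum]
    refine Finset.sum_congr rfl fun rh _ => ?_
    rw [hbr (v rh z x) rh z x]
    ring
  have hstepB : auxSum p d μ₁ μ₂ W q₁ q₂ q₃ ≤ auxSum p d μ₁ μ₂ w q₁ q₂ q₃ := by
    rw [hrw W, hrw w]
    refine Finset.sum_le_sum fun z _ => Finset.sum_le_sum fun x _ => ?_
    refine mul_le_mul_of_nonneg_left ?_ (mul_nonneg (hpZX z x).le hμ.le)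
    calc ∑ rh, W rh z x * (logb 2 (W rh z x) - logb 2 (K rh z x))
        = ∑ rh, (K rh z x / ∑ rh', K rh' z x)
            * (logb 2 (K rh z x / ∑ rh', K rh' z x) - logb 2 (K rh z x)) :=
          Finset.sum_congr rfl fun rh _ => by rw [hWeq rh z x]
      _ ≤ ∑ rh, w rh z x * (logb 2 (w rh z x) - logb 2 (K rh z x)) :=
          stepB_core (fun rh => K rh z x) (fun rh => hK rh z x)
            (fun rh => w rh z x) (fun rh => (hw.1 rh z x).1) (hw.2 z x)
  exact le_trans hstepA hstepB


end
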